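/- Let X be a locally compact metric space (or real analytic manifold), (τ,V) a finite dimensional continuous unitary-izable representation of a compact group K, and for each u ∈ X let ⟨·,·⟩_u be an inner product on V with respect to which every τ(k) is unitary, varying continuously (resp. real analytically) in u. Then there exist maps u ↦ e₁(u),…,e_n(u) ∈ V, continuous (resp. real analytic) in u, such that for each u the vectors e₁(u),…,e_n(u) form an orthonormal basis of V with respect to ⟨·,·⟩_u, and the matrix of τ(k) with respect to this basis is independent of u for every k ∈ K. -/

import Mathlib

set_option maxHeartbeats 1000000

open Matrix Filter Topology
open scoped ComplexOrder

namespace Matrix.PosSemidef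

open scoped MatrixOrder

variable {N : ℕ} {P : Matrix (Fin N) (Fin N) ℂ}

noncomputable def sqrt (hP : P.PosSemidef) : Matrix (Fin N) (Fin N) ℂ := CFC.sqrt P

lemma posSemidef_sqrt (hP : P.PosSemidef) : hP.sqrt.PosSemidef :=
  (CFC.sqrt_nonneg P).posSemidef

lemma sqrt_mul_self (hP : P.PosSemidef) : hP.sqrt * hP.sqrt = P :=
  CFC.sqrt_mul_sqrt_self P hP.nonneg

lemma eq_sqrt_of_sq_eq {Q : Matrix (Fin N) (Fin N) ℂ} (hQ : Q.PosSemidef) (hP : P.PosSemidef)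
    (h : Q ^ 2 = P) : Q = hP.sqrt :=
  (CFC.sqrt_unique (by rw [← sq]; exact h) hQ.nonneg).symm

end Matrix.PosSemidef

namespace Stmt3Aux

variable {N : ℕ}

lemma psd_of_tendsto {S : ℕ → Matrix (Fin N) (Fin N) ℂ} {L : Matrix (Fin N) (Fin N) ℂ}
    (hS : ∀ m, (S m).PosSemidef) (hT : Tendsto S atTop (𝓝 L)) : L.PosSemidef := by
  refine posSemidef_iff_dotProduct_mulVec.mpr ⟨?_, ?_⟩
  · have h1 : Tendsto (fun m => (S m)ᴴ) atTop (𝓝 Lᴴ) :=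
      ((continuous_id.matrix_conjTranspose).tendsto L).comp hT
    have h2 : ∀ m, (S m)ᴴ = S m := fun m => (hS m).1
    exact tendsto_nhds_unique (by simpa [h2] using h1) hT
  · intro x
    have hc : Continuous fun A : Matrix (Fin N) (Fin N) ℂ => dotProduct (star x) (A *ᵥ x) :=
      continuous_const.dotProduct (continuous_id.matrix_mulVec continuous_const)
    have hT2 : Tendsto (fun m => dotProduct (star x) (S m *ᵥ x)) atTop
        (𝓝 (dotProduct (star x) (L *ᵥ x))) := (hc.tendsto L).comp hT
    have hnn := fun m => RCLike.nonneg_iff.mp ((hS m).dotProduct_mulVec_nonneg x)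
    rw [RCLike.nonneg_iff]
    constructor
    · refine ge_of_tendsto ((RCLike.continuous_re.tendsto _).comp hT2) ?_
      exact Eventually.of_forall fun m => (hnn m).1
    · have h3 := (RCLike.continuous_im.tendsto _).comp hT2
      simp only [Function.comp_def] at h3
      have h4 : (fun m => RCLike.im (dotProduct (star x) (S m *ᵥ x))) = fun _ => (0 : ℝ) :=
        funext fun m => (hnn m).2
      rw [h4] at h3
      exact tendsto_nhds_unique h3 tendsto_const_nhds

lemma sqrt_entry_bound {P : Matrix (Fin N) (Fin N) ℂ} (hP : P.PosSemidef) (i j : Fin N) :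
    ‖hP.sqrt i j‖ ≤ Real.sqrt ((P.trace).re) := by
  set S := hP.sqrt with hSdef
  have hH : Sᴴ = S := hP.posSemidef_sqrt.1
  have hSS : S * S = P := hP.sqrt_mul_self
  have hconj : ∀ a b, S b a = (starRingEnd ℂ) (S a b) := by
    intro a b
    calc S b a = Sᴴ b a := by rw [hH]
      _ = (starRingEnd ℂ) (S a b) := rfl
  have htr : (P.trace).re = ∑ a, ∑ b, ‖S a b‖ ^ 2 := by
    rw [← hSS]
    have h5 : (S * S).trace = ∑ a, ∑ b, ((‖S a b‖ : ℂ) ^ 2) := by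
      rw [Matrix.trace]
      simp only [Matrix.diag, Matrix.mul_apply]
      refine Finset.sum_congr rfl fun a _ => Finset.sum_congr rfl fun b _ => ?_
      rw [hconj a b, RCLike.mul_conj]
      rfl
    rw [h5]
    rw [Complex.re_sum]
    refine Finset.sum_congr rfl fun a _ => ?_
    rw [Complex.re_sum]
    refine Finset.sum_congr rfl fun b _ => ?_
    norm_cast
  have h1 : ‖S i j‖ ^ 2 ≤ (P.trace).re := by
    rw [htr]
    calc ‖S i j‖ ^ 2 ≤ ∑ b, ‖S i b‖ ^ 2 :=
          Finset.single_le_sum (fun b _ => sq_nonneg ‖S i b‖) (Finset.mem_univ j)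
      _ ≤ ∑ a, ∑ b, ‖S a b‖ ^ 2 :=
          Finset.single_le_sum
            (fun a _ => Finset.sum_nonneg fun b _ => sq_nonneg ‖S a b‖) (Finset.mem_univ i)
  calc ‖S i j‖ = Real.sqrt (‖S i j‖ ^ 2) := (Real.sqrt_sq (norm_nonneg _)).symm
    _ ≤ Real.sqrt ((P.trace).re) := Real.sqrt_le_sqrt h1

lemma continuous_psd_sqrt {X : Type*} [MetricSpace X]
    {G : X → Matrix (Fin N) (Fin N) ℂ}
    (hG : ∀ u, (G u).PosSemidef) (hc : Continuous G) :
    Continuous fun u => (hG u).sqrt := by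
  rw [continuous_iff_seqContinuous]
  intro x u hx
  have htrc : Continuous fun u => ((G u).trace).re :=
    Complex.continuous_re.comp ((continuous_finset_sum _ fun i _ => hc.matrix_elem i i))
  have htr : Tendsto (fun m => ((G (x m)).trace).re) atTop (𝓝 (((G u).trace).re)) :=
    (htrc.tendsto u).comp hx
  obtain ⟨C, hC⟩ := htr.bddAbove_range
  set C' := Real.sqrt C with hC'
  have hbound : ∀ m i j, ‖(hG (x m)).sqrt i j‖ ≤ C' := fun m i j =>
    (sqrt_entry_bound _ i j).trans (Real.sqrt_le_sqrt (hC ⟨m, rfl⟩))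
  apply tendsto_of_subseq_tendsto
  intro ns hns
  set s : Set (Matrix (Fin N) (Fin N) ℂ) :=
    {A | ∀ i j, A i j ∈ Metric.closedBall (0 : ℂ) C'} with hs
  have hsc : IsCompact s := by
    have h1 : IsCompact (Set.univ.pi fun _ : Fin N =>
        (Set.univ.pi fun _ : Fin N => Metric.closedBall (0 : ℂ) C')) :=
      isCompact_univ_pi fun _ => isCompact_univ_pi fun _ => isCompact_closedBall _ _
    have h2 : s = Set.univ.pi fun _ : Fin N =>
        (Set.univ.pi fun _ : Fin N => Metric.closedBall (0 : ℂ) C') := by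
      ext A
      constructor
      · intro hA i _ j _
        exact hA i j
      · intro hA i j
        exact hA i (Set.mem_univ i) j (Set.mem_univ j)
    rw [h2]
    exact h1
  have hmem : ∀ m, (hG (x (ns m))).sqrt ∈ s := by
    intro m i j
    simpa [Metric.mem_closedBall, dist_zero_right] using hbound (ns m) i j
  haveI : FirstCountableTopology (Matrix (Fin N) (Fin N) ℂ) :=
    inferInstanceAs (FirstCountableTopology (Fin N → Fin N → ℂ))
  obtain ⟨L, hLs, φ, hφ, hLt⟩ := hsc.tendsto_subseq hmem
  refine ⟨φ, ?_⟩
  have hLt' : Tendsto (fun k => (hG (x (ns (φ k)))).sqrt) atTop (𝓝 L) := hLt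
  have hLpsd : L.PosSemidef :=
    psd_of_tendsto (fun k => (hG (x (ns (φ k)))).posSemidef_sqrt) hLt'
  have hxu : Tendsto (fun k => x (ns (φ k))) atTop (𝓝 u) := hx.comp (hns.comp hφ.tendsto_atTop)
  have hsq : Tendsto (fun k => (hG (x (ns (φ k)))).sqrt * (hG (x (ns (φ k)))).sqrt) atTop
      (𝓝 (L * L)) := hLt'.mul hLt'
  have hGt : Tendsto (fun k => G (x (ns (φ k)))) atTop (𝓝 (G u)) := (hc.tendsto u).comp hxu
  have hLL : L * L = G u := by
    refine tendsto_nhds_unique ?_ hGt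
    simpa [Matrix.PosSemidef.sqrt_mul_self] using hsq
  have hfin : L = (hG u).sqrt := hLpsd.eq_sqrt_of_sq_eq (hG u) (by rw [pow_two, hLL])
  rw [hfin] at hLt'
  exact hLt'

lemma sqrt_commute {P M : Matrix (Fin N) (Fin N) ℂ} (hP : P.PosSemidef)
    (hM1 : Mᴴ * M = 1) (hM2 : M * Mᴴ = 1) (hcomm : P * M = M * P) :
    hP.sqrt * M = M * hP.sqrt := by
  set S := hP.sqrt with hSdef
  have hpsd : (Mᴴ * S * M).PosSemidef := hP.posSemidef_sqrt.conjTranspose_mul_mul_same M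
  have hMP : Mᴴ * P = P * Mᴴ := by
    calc Mᴴ * P = Mᴴ * P * (M * Mᴴ) := by rw [hM2, mul_one]
      _ = Mᴴ * (P * M) * Mᴴ := by noncomm_ring
      _ = Mᴴ * (M * P) * Mᴴ := by rw [hcomm]
      _ = (Mᴴ * M) * (P * Mᴴ) := by noncomm_ring
      _ = P * Mᴴ := by rw [hM1, one_mul]
  have hsq : (Mᴴ * S * M) ^ 2 = P := by
    have hSS : S * S = P := hP.sqrt_mul_self
    calc (Mᴴ * S * M) ^ 2 = Mᴴ * S * (M * Mᴴ) * S * M := by rw [pow_two]; noncomm_ring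
      _ = Mᴴ * (S * S) * M := by rw [hM2]; noncomm_ring
      _ = Mᴴ * P * M := by rw [hSS]
      _ = P * (Mᴴ * M) := by rw [hMP]; noncomm_ring
      _ = P := by rw [hM1, mul_one]
  have hkey : Mᴴ * S * M = S := (hpsd.eq_sqrt_of_sq_eq hP hsq).trans hSdef.symm
  calc S * M = (M * Mᴴ) * S * M := by rw [hM2, one_mul]
    _ = M * (Mᴴ * S * M) := by noncomm_ring
    _ = M * S := by rw [hkey]

lemma sqrt_inv_conj {P : Matrix (Fin N) (Fin N) ℂ} (hP : P.PosDef) :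
    (hP.inv.posSemidef).sqrt * P * (hP.inv.posSemidef).sqrt = 1 := by
  set S := (hP.inv.posSemidef).sqrt with hSdef
  have hSS : S * S = P⁻¹ := (hP.inv.posSemidef).sqrt_mul_self
  have hdet : IsUnit P.det := (Matrix.isUnit_iff_isUnit_det P).mp hP.isUnit
  have hPinv : P * P⁻¹ = 1 := mul_nonsing_inv P hdet
  have hPinv' : P⁻¹ * P = 1 := nonsing_inv_mul P hdet
  have hcomm1 : S * P⁻¹ = P⁻¹ * S := by rw [← hSS]; noncomm_ring
  have hcomm2 : P * S = S * P := by
    calc P * S = P * S * (P⁻¹ * P) := by rw [hPinv', mul_one]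
      _ = P * (S * P⁻¹) * P := by noncomm_ring
      _ = P * (P⁻¹ * S) * P := by rw [hcomm1]
      _ = (P * P⁻¹) * (S * P) := by noncomm_ring
      _ = S * P := by rw [hPinv, one_mul]
  calc S * P * S = S * S * P := by rw [mul_assoc, hcomm2, ← mul_assoc]
    _ = 1 := by rw [hSS, hPinv']


lemma sum_smul_sum {V : Type*} [AddCommGroup V] [Module ℂ V] {n : ℕ}
    (A B : Matrix (Fin n) (Fin n) ℂ) (f : Fin n → V) (i : Fin n) :
    ∑ l, A l i • (∑ m, B m l • f m) = ∑ m, (B * A) m i • f m := by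
  calc ∑ l, A l i • ∑ m, B m l • f m = ∑ l, ∑ m, (B m l * A l i) • f m := by
        refine Finset.sum_congr rfl fun l _ => ?_
        rw [Finset.smul_sum]
        refine Finset.sum_congr rfl fun m _ => ?_
        rw [smul_smul, mul_comm]
    _ = ∑ m, ∑ l, (B m l * A l i) • f m := Finset.sum_comm
    _ = ∑ m, (B * A) m i • f m := by
        refine Finset.sum_congr rfl fun m _ => ?_
        rw [Matrix.mul_apply, Finset.sum_smul]

end Stmt3Aux

section Main

open Stmt3Aux

/-- Given a continuous family `u ↦ ⟨·,·⟩_u` of `K`-invariant Hermitian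
inner products (`ip u`, linear in the first variable) on a finite dimensional
continuous representation `(τ, V)` of a compact group `K`, there are continuous maps
`u ↦ e₁(u), …, e_n(u)` forming, for each `u`, an orthonormal basis of `V` with respect
to `⟨·,·⟩_u` (orthonormality together with `n = dim V` makes each `e(u)` a basis),
such that the matrix of every `τ(k)` in this basis is independent of `u`. -/
theorem stmt3
    {X : Type*} [MetricSpace X] [LocallyCompactSpace X]
    {K : Type*} [Group K] [TopologicalSpace K] [IsTopologicalGroup K] [CompactSpace K]
    {V : Type*} [AddCommGroup V] [Module ℂ V] [FiniteDimensional ℂ V]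
    [TopologicalSpace V] [IsTopologicalAddGroup V] [ContinuousSMul ℂ V] [T2Space V]
    {n : ℕ} (hdim : Module.finrank ℂ V = n)
    (τ : K →* (V ≃ₗ[ℂ] V))
    (hτcont : Continuous fun p : K × V => τ p.1 p.2)
    (ip : X → V → V → ℂ)
    (hadd₁ : ∀ u v v' w, ip u (v + v') w = ip u v w + ip u v' w)
    (hsmul₁ : ∀ u (c : ℂ) v w, ip u (c • v) w = c * ip u v w)
    (hconj : ∀ u v w, ip u v w = starRingEnd ℂ (ip u w v))
    (hposdef : ∀ u v, v ≠ 0 → 0 < (ip u v v).re)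
    (hKinv : ∀ u k v w, ip u (τ k v) (τ k w) = ip u v w)
    (hcont : ∀ v w, Continuous fun u => ip u v w) :
    ∃ e : X → Fin n → V,
      (∀ i, Continuous fun u => e u i) ∧
      (∀ u i j, ip u (e u i) (e u j) = if i = j then 1 else 0) ∧
      ∃ mcoef : K → Matrix (Fin n) (Fin n) ℂ,
        ∀ u k i, τ k (e u i) = ∑ j, mcoef k j i • e u j := by
  classical
  rcases isEmpty_or_nonempty X with hX | hX
  · exact ⟨fun u => isEmptyElim u,
      fun i => continuous_iff_continuousAt.mpr fun u => isEmptyElim u,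
      fun u => isEmptyElim u, fun _ => 1, fun u => isEmptyElim u⟩
  obtain ⟨u₀⟩ := hX
  -- a basis of V
  set c : Module.Basis (Fin n) ℂ V := (Module.finBasis ℂ V).reindex (finCongr hdim) with hc
  -- basic sesquilinear algebra
  have hzero₁ : ∀ u w, ip u 0 w = 0 := by
    intro u w
    have h := hadd₁ u 0 0 w
    rw [add_zero] at h
    exact (left_eq_add.mp h)
  have hsum₁ : ∀ u (s : Finset (Fin n)) (f : Fin n → V) (w : V),
      ip u (∑ l ∈ s, f l) w = ∑ l ∈ s, ip u (f l) w := by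
    intro u s f w
    induction s using Finset.cons_induction with
    | empty => simpa using hzero₁ u w
    | cons a s ha ih => rw [Finset.sum_cons, hadd₁, ih, Finset.sum_cons]
  have hsum₂ : ∀ u (v : V) (s : Finset (Fin n)) (f : Fin n → V),
      ip u v (∑ m ∈ s, f m) = ∑ m ∈ s, ip u v (f m) := by
    intro u v s f
    rw [hconj, hsum₁, map_sum]
    exact Finset.sum_congr rfl fun m _ => (hconj u v (f m)).symm
  have hsmul₂ : ∀ u (a : ℂ) (v w : V),
      ip u v (a • w) = (starRingEnd ℂ) a * ip u v w := by
    intro u a v w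
    calc ip u v (a • w) = (starRingEnd ℂ) (ip u (a • w) v) := hconj _ _ _
      _ = (starRingEnd ℂ) (a * ip u w v) := by rw [hsmul₁]
      _ = (starRingEnd ℂ) a * (starRingEnd ℂ) (ip u w v) := RingHom.map_mul _ _ _
      _ = (starRingEnd ℂ) a * ip u v w := by rw [← hconj]
  -- the Gram matrix family
  set Gm : X → Matrix (Fin n) (Fin n) ℂ :=
    fun u => Matrix.of fun m l => ip u (c l) (c m) with hGm
  have hexp : ∀ u (A : Matrix (Fin n) (Fin n) ℂ) (i j : Fin n),
      ip u (∑ l, A l i • c l) (∑ m, A m j • c m) = (Aᴴ * Gm u * A) j i := by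
    intro u A i j
    calc ip u (∑ l, A l i • c l) (∑ m, A m j • c m)
        = ∑ l, ∑ m, A l i * ((starRingEnd ℂ) (A m j) * Gm u m l) := by
          rw [hsum₁]
          refine Finset.sum_congr rfl fun l _ => ?_
          rw [hsmul₁, hsum₂, Finset.mul_sum]
          refine Finset.sum_congr rfl fun m _ => ?_
          rw [hsmul₂]
          rfl
      _ = (Aᴴ * Gm u * A) j i := by
          simp only [Matrix.mul_apply, Matrix.conjTranspose_apply, Finset.sum_mul,
            Complex.star_def]
          refine Finset.sum_congr rfl fun l _ => Finset.sum_congr rfl fun m _ => ?_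
          ring
  have hGpd : ∀ u, (Gm u).PosDef := by
    intro u
    refine Matrix.posDef_iff_dotProduct_mulVec.mpr ⟨?_, ?_⟩
    · ext m l
      simp only [Matrix.conjTranspose_apply, hGm, Matrix.of_apply, Complex.star_def]
      exact (hconj u (c l) (c m)).symm
    · intro x hx
      have hv0 : (∑ l, x l • c l) ≠ 0 := by
        intro h0
        exact hx (funext fun i =>
          Fintype.linearIndependent_iff.mp c.linearIndependent x h0 i)
      have hquad : ip u (∑ l, x l • c l) (∑ m, x m • c m)
          = dotProduct (star x) (Gm u *ᵥ x) := by
        calc ip u (∑ l, x l • c l) (∑ m, x m • c m)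
            = ∑ l, ∑ m, x l * ((starRingEnd ℂ) (x m) * Gm u m l) := by
              rw [hsum₁]
              refine Finset.sum_congr rfl fun l _ => ?_
              rw [hsmul₁, hsum₂, Finset.mul_sum]
              refine Finset.sum_congr rfl fun m _ => ?_
              rw [hsmul₂]
              rfl
          _ = dotProduct (star x) (Gm u *ᵥ x) := by
              simp only [dotProduct, Matrix.mulVec, Pi.star_apply, Complex.star_def,
                Finset.mul_sum]
              rw [Finset.sum_comm]
              refine Finset.sum_congr rfl fun m _ => Finset.sum_congr rfl fun l _ => ?_
              ring
      have him : (ip u (∑ l, x l • c l) (∑ l, x l • c l)).im = 0 := by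
        have h := hconj u (∑ l, x l • c l) (∑ l, x l • c l)
        exact Complex.conj_eq_iff_im.mp h.symm
      have hre := hposdef u _ hv0
      rw [← hquad]
      rw [RCLike.pos_iff]
      constructor
      · simpa using hre
      · simpa using him
  -- continuity of the Gram family
  have hGc : Continuous Gm := continuous_matrix fun m l => hcont (c l) (c m)
  -- continuity of inverses of positive definite continuous families
  have hinvc : ∀ (F : X → Matrix (Fin n) (Fin n) ℂ), Continuous F → (∀ u, (F u).PosDef) →
      Continuous fun u => (F u)⁻¹ := by
    intro F hF hFpd
    rw [continuous_iff_continuousAt]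
    intro u
    have hdet : IsUnit (F u).det := (Matrix.isUnit_iff_isUnit_det _).mp (hFpd u).isUnit
    have h1 : ContinuousAt Ring.inverse (F u).det := by
      have h2 := NormedRing.inverse_continuousAt hdet.unit
      simpa using h2
    exact (continuousAt_matrix_inv (F u) h1).comp hF.continuousAt
  -- the square root of the inverse Gram matrix at the base point
  set B₀ : Matrix (Fin n) (Fin n) ℂ := ((hGpd u₀).inv.posSemidef).sqrt with hB₀
  have hB₀herm : B₀ᴴ = B₀ := ((hGpd u₀).inv.posSemidef).posSemidef_sqrt.1
  have hB₀GB₀ : B₀ * Gm u₀ * B₀ = 1 := Stmt3Aux.sqrt_inv_conj (hGpd u₀)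
  have hB₀det : IsUnit B₀.det := by
    have h1 : B₀.det * ((Gm u₀).det * B₀.det) = 1 := by
      have h2 := congrArg Matrix.det hB₀GB₀
      simpa [Matrix.det_mul, mul_assoc] using h2
    exact IsUnit.of_mul_eq_one _ h1
  have hB₀unit : IsUnit B₀ := (Matrix.isUnit_iff_isUnit_det _).mpr hB₀det
  have hB₀l : B₀⁻¹ * B₀ = 1 := nonsing_inv_mul _ hB₀det
  have hB₀r : B₀ * B₀⁻¹ = 1 := mul_nonsing_inv _ hB₀det
  -- the matrix of τ k in the basis c
  set M : K → Matrix (Fin n) (Fin n) ℂ :=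
    fun k => Matrix.of fun l i => c.repr (τ k (c i)) l with hM
  have hMexp : ∀ k i, τ k (c i) = ∑ l, M k l i • c l := fun k i => (c.sum_repr _).symm
  have hMG : ∀ u k, (M k)ᴴ * Gm u * M k = Gm u := by
    intro u k
    ext a b
    have h := hexp u (M k) b a
    rw [← hMexp k b, ← hMexp k a, hKinv] at h
    exact h.symm
  -- the conjugated Gram family
  set Gp : X → Matrix (Fin n) (Fin n) ℂ := fun u => B₀ * Gm u * B₀ with hGp
  have hGppd : ∀ u, (Gp u).PosDef := by
    intro u
    have hBx : ∀ (x : Fin n → ℂ), x ≠ 0 → B₀ *ᵥ x ≠ 0 := by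
      intro x hx h0
      exact hx (Matrix.mulVec_injective_iff_isUnit.mpr hB₀unit
        (h0.trans (Matrix.mulVec_zero B₀).symm))
    refine Matrix.posDef_iff_dotProduct_mulVec.mpr ⟨?_, ?_⟩
    · show (Gp u)ᴴ = Gp u
      rw [hGp]
      simp only
      rw [Matrix.conjTranspose_mul, Matrix.conjTranspose_mul, hB₀herm, (hGpd u).1.eq]
      noncomm_ring
    · intro x hx
      have h := (hGpd u).dotProduct_mulVec_pos (hBx x hx)
      have he : Gp u = B₀ᴴ * Gm u * B₀ := by rw [hB₀herm]
      rw [he]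
      simpa only [star_mulVec, dotProduct_mulVec, vecMul_vecMul] using h
  have hGpc : Continuous Gp := (continuous_const.matrix_mul hGc).matrix_mul continuous_const
  have hGpinvc : Continuous fun u => (Gp u)⁻¹ := hinvc Gp hGpc hGppd
  -- the square roots
  set Bp : X → Matrix (Fin n) (Fin n) ℂ :=
    fun u => ((hGppd u).inv.posSemidef).sqrt with hBp
  have hBpc : Continuous Bp :=
    Stmt3Aux.continuous_psd_sqrt (fun u => (hGppd u).inv.posSemidef) hGpinvc
  have hBpherm : ∀ u, (Bp u)ᴴ = Bp u := fun u =>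
    ((hGppd u).inv.posSemidef).posSemidef_sqrt.1
  have hBpGpBp : ∀ u, Bp u * Gp u * Bp u = 1 := fun u => Stmt3Aux.sqrt_inv_conj (hGppd u)
  have hGp0 : Gp u₀ = 1 := hB₀GB₀
  -- the conjugated representation matrices
  set M' : K → Matrix (Fin n) (Fin n) ℂ := fun k => B₀⁻¹ * M k * B₀ with hM'
  have hM'H : ∀ k, (M' k)ᴴ = B₀ * (M k)ᴴ * B₀⁻¹ := by
    intro k
    rw [hM']
    simp only
    rw [Matrix.conjTranspose_mul, Matrix.conjTranspose_mul,
      Matrix.conjTranspose_nonsing_inv, hB₀herm]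
    noncomm_ring
  have hM'G' : ∀ u k, (M' k)ᴴ * Gp u * M' k = Gp u := by
    intro u k
    rw [hM'H]
    calc B₀ * (M k)ᴴ * B₀⁻¹ * (B₀ * Gm u * B₀) * (B₀⁻¹ * M k * B₀)
        = B₀ * (M k)ᴴ * (B₀⁻¹ * B₀) * Gm u * (B₀ * B₀⁻¹) * (M k * B₀) := by noncomm_ring
      _ = B₀ * ((M k)ᴴ * Gm u * M k) * B₀ := by rw [hB₀l, hB₀r]; noncomm_ring
      _ = Gp u := by rw [hMG]
  have hM'u1 : ∀ k, (M' k)ᴴ * M' k = 1 := by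
    intro k
    have h := hM'G' u₀ k
    rwa [hGp0, mul_one] at h
  have hM'u2 : ∀ k, M' k * (M' k)ᴴ = 1 := fun k => mul_eq_one_comm.mp (hM'u1 k)
  have hGpM' : ∀ u k, Gp u * M' k = M' k * Gp u := by
    intro u k
    calc Gp u * M' k = (M' k * (M' k)ᴴ) * Gp u * M' k := by rw [hM'u2, one_mul]
      _ = M' k * ((M' k)ᴴ * Gp u * M' k) := by noncomm_ring
      _ = M' k * Gp u := by rw [hM'G']
  have hGpinvM' : ∀ u k, (Gp u)⁻¹ * M' k = M' k * (Gp u)⁻¹ := by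
    intro u k
    have hdet : IsUnit (Gp u).det := (Matrix.isUnit_iff_isUnit_det _).mp (hGppd u).isUnit
    have h1 : Gp u * (Gp u)⁻¹ = 1 := mul_nonsing_inv _ hdet
    have h2 : (Gp u)⁻¹ * Gp u = 1 := nonsing_inv_mul _ hdet
    calc (Gp u)⁻¹ * M' k = (Gp u)⁻¹ * M' k * (Gp u * (Gp u)⁻¹) := by rw [h1, mul_one]
      _ = (Gp u)⁻¹ * (M' k * Gp u) * (Gp u)⁻¹ := by noncomm_ring
      _ = (Gp u)⁻¹ * (Gp u * M' k) * (Gp u)⁻¹ := by rw [hGpM']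
      _ = ((Gp u)⁻¹ * Gp u) * (M' k * (Gp u)⁻¹) := by noncomm_ring
      _ = M' k * (Gp u)⁻¹ := by rw [h2, one_mul]
  have hBpM' : ∀ u k, Bp u * M' k = M' k * Bp u := fun u k =>
    Stmt3Aux.sqrt_commute ((hGppd u).inv.posSemidef) (hM'u1 k) (hM'u2 k) (hGpinvM' u k)
  -- the final family
  refine ⟨fun u i => ∑ l, (B₀ * Bp u) l i • c l, ?_, ?_, M', ?_⟩
  · intro i
    exact continuous_finset_sum _ fun l _ =>
      ((continuous_const.matrix_mul hBpc).matrix_elem l i).smul continuous_const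
  · intro u i j
    have h := hexp u (B₀ * Bp u) i j
    have hCs : (B₀ * Bp u)ᴴ * Gm u * (B₀ * Bp u) = 1 := by
      rw [Matrix.conjTranspose_mul, hB₀herm, hBpherm]
      calc Bp u * B₀ * Gm u * (B₀ * Bp u) = Bp u * (B₀ * Gm u * B₀) * Bp u := by noncomm_ring
        _ = Bp u * Gp u * Bp u := by rw [hGp]
        _ = 1 := hBpGpBp u
    rw [h, hCs, Matrix.one_apply]
    by_cases hij : i = j
    · simp [hij]
    · simp [hij, Ne.symm hij]
  · intro u k i
    have hMC : M k * (B₀ * Bp u) = (B₀ * Bp u) * M' k := by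
      have h1 : M k * B₀ = B₀ * M' k := by
        rw [hM']
        calc M k * B₀ = (B₀ * B₀⁻¹) * M k * B₀ := by rw [hB₀r, one_mul]
          _ = B₀ * (B₀⁻¹ * M k * B₀) := by noncomm_ring
      calc M k * (B₀ * Bp u) = (M k * B₀) * Bp u := by noncomm_ring
        _ = B₀ * M' k * Bp u := by rw [h1]
        _ = B₀ * (Bp u * M' k) := by rw [hBpM']; noncomm_ring
        _ = (B₀ * Bp u) * M' k := by noncomm_ring
    have hL : τ k (∑ l, (B₀ * Bp u) l i • c l) = ∑ m, (M k * (B₀ * Bp u)) m i • c m := by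
      have h2 : τ k (∑ l, (B₀ * Bp u) l i • c l)
          = ∑ l, (B₀ * Bp u) l i • (∑ m, M k m l • c m) := by
        rw [map_sum]
        refine Finset.sum_congr rfl fun l _ => ?_
        rw [_root_.map_smul, ← hMexp]
      rw [h2, Stmt3Aux.sum_smul_sum]
    have hR : ∑ j, M' k j i • (∑ m, (B₀ * Bp u) m j • c m)
        = ∑ m, ((B₀ * Bp u) * M' k) m i • c m := Stmt3Aux.sum_smul_sum _ _ _ _
    rw [hL, hR, hMC]

end Main
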